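/- Each set U_A (for n ∈ ℕ and A a finite tree of height n without dead ends) is clopen in the hit-or-miss topology on C, and the family of all such sets U_A is a basis for the hit-or-miss topology on C. -/
import Mathlib


open Set MeasureTheory Topology Filter

/-- Cantor space `2^ℕ`. -/
abbrev Cantor : Type := ℕ → Bool

/-- The basic interval `I(σ)` of all extensions of the finite binary string `σ`. -/
def cyl (σ : List Bool) : Set Cantor :=
  {x | ∀ i : Fin σ.length, x i = σ.get i}

/-- The space `C` of nonempty closed subsets of Cantor space. -/
abbrev CC : Type := {K : Set Cantor // K.Nonempty ∧ IsClosed K}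

/-- The hit-or-miss topology on `C`, generated by the sets
`V(U) = {K : K ∩ U ≠ ∅}` and `W(U) = {K : K ⊆ U}` for `U` open. -/
instance (priority := 10000) hitMissTop : TopologicalSpace CC :=
  TopologicalSpace.generateFrom
    ({S | ∃ U : Set Cantor, IsOpen U ∧ S = {K : CC | (K.1 ∩ U).Nonempty}} ∪
     {S | ∃ U : Set Cantor, IsOpen U ∧ S = {K : CC | K.1 ⊆ U}})

/-- The Borel σ-algebra of the hit-or-miss topology. -/
instance (priority := 10000) hitMissMeasurable : MeasurableSpace CC := borel CC

/-- `A` is a finite tree of height `n` without dead ends. -/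
def FinTree (n : ℕ) (A : Finset (List Bool)) : Prop :=
  A.Nonempty ∧
  (∀ σ ∈ A, σ.length ≤ n) ∧
  (∀ σ τ : List Bool, σ <+: τ → τ ∈ A → σ ∈ A) ∧
  (∀ σ ∈ A, σ.length < n → σ ++ [false] ∈ A ∨ σ ++ [true] ∈ A)

/-- `U_A = {K ∈ C : T_K ∩ {0,1}^{≤ n} = A}`. -/
def UA (n : ℕ) (A : Finset (List Bool)) : Set CC :=
  {K | ∀ σ : List Bool, σ.length ≤ n → (σ ∈ A ↔ (K.1 ∩ cyl σ).Nonempty)}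

/-- The weight of a node `σ` of `A` in the symmetric branching process with parameter `β`. -/
noncomputable def symWeight (β : List Bool → ℝ) (A : Finset (List Bool)) (σ : List Bool) : ℝ :=
  if σ ++ [false] ∈ A ∧ σ ++ [true] ∈ A then 1 - 2 * β σ else β σ

/-- `μ` is the symmetric branching measure on `C` with parameter `β`. -/
def IsSymBranching (β : List Bool → ℝ) (μ : Measure CC) : Prop :=
  IsProbabilityMeasure μ ∧
  ∀ (n : ℕ) (A : Finset (List Bool)), FinTree n A →
    (μ (UA n A)).toReal = ∏ σ ∈ A.filter (fun σ => σ.length < n), symWeight β A σ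

/-- The weight of a node `σ` of `A` in the `(b₀,b₁)`-branching process. -/
noncomputable def asymWeight (b0 b1 : ℝ) (A : Finset (List Bool)) (σ : List Bool) : ℝ :=
  if σ ++ [false] ∈ A ∧ σ ++ [true] ∈ A then 1 - b0 - b1
  else if σ ++ [false] ∈ A then b0 else b1

/-- `μ` is the `(b₀,b₁)`-branching measure on `C`. -/
def IsBranching (b0 b1 : ℝ) (μ : Measure CC) : Prop :=
  IsProbabilityMeasure μ ∧
  ∀ (n : ℕ) (A : Finset (List Bool)), FinTree n A →
    (μ (UA n A)).toReal = ∏ σ ∈ A.filter (fun σ => σ.length < n), asymWeight b0 b1 A σ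

/-- The capacity `T(Q) = μ*({K ∈ C : K ∩ Q ≠ ∅})` associated to a measure on `C`. -/
noncomputable def cap (μ : Measure CC) (Q : Set Cantor) : ℝ :=
  (μ {K : CC | (K.1 ∩ Q).Nonempty}).toReal

-- helpers
def stringOf (x : Cantor) (n : ℕ) : List Bool := List.ofFn (fun i : Fin n => x i)

lemma mem_cyl_iff {x : Cantor} {σ : List Bool} :
    x ∈ cyl σ ↔ ∀ i : Fin σ.length, x i = σ.get i := Iff.rfl

lemma length_stringOf (x : Cantor) (n : ℕ) : (stringOf x n).length = n := by
  simp [stringOf]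

lemma get_stringOf (x : Cantor) (n : ℕ) (i : Fin (stringOf x n).length) :
    (stringOf x n).get i = x i := by
  rcases i with ⟨i, hi⟩
  rw [length_stringOf] at hi
  simp [stringOf, List.get_ofFn]

lemma mem_cyl_stringOf_iff {x y : Cantor} {n : ℕ} :
    y ∈ cyl (stringOf x n) ↔ ∀ i < n, y i = x i := by
  constructor
  · intro h i hi
    have := h ⟨i, by rw [length_stringOf]; exact hi⟩
    rwa [get_stringOf] at this
  · intro h i
    rw [get_stringOf]
    exact h i (lt_of_lt_of_eq i.2 (length_stringOf x n))

lemma mem_cyl_stringOf (x : Cantor) (n : ℕ) : x ∈ cyl (stringOf x n) :=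
  mem_cyl_stringOf_iff.mpr fun _ _ => rfl

lemma cyl_mono {σ τ : List Bool} (h : σ <+: τ) : cyl τ ⊆ cyl σ := by
  obtain ⟨ρ, rfl⟩ := h
  intro x hx ⟨i, hi⟩
  have := hx ⟨i, by simp; omega⟩
  simpa [List.getElem_append, hi] using this

lemma isOpen_cyl (σ : List Bool) : IsOpen (cyl σ) := by
  have : cyl σ = ⋂ i : Fin σ.length, {x : Cantor | x i = σ.get i} := by
    ext x; simp [cyl]
  rw [this]
  refine isOpen_iInter_of_finite fun i => ?_
  have h : {x : Cantor | x i = σ.get i} = (fun x : Cantor => x (i : ℕ)) ⁻¹' {σ.get i} := rfl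
  rw [h]
  exact (isOpen_discrete _).preimage (continuous_apply _)

lemma isClosed_cyl (σ : List Bool) : IsClosed (cyl σ) := by
  have : cyl σ = ⋂ i : Fin σ.length, {x : Cantor | x i = σ.get i} := by
    ext x; simp [cyl]
  rw [this]
  refine isClosed_iInter fun i => ?_
  have h : {x : Cantor | x i = σ.get i} = (fun x : Cantor => x (i : ℕ)) ⁻¹' {σ.get i} := rfl
  rw [h]
  exact (isClosed_discrete _).preimage (continuous_apply _)

lemma exists_cyl_subset {U : Set Cantor} (hU : IsOpen U) {x : Cantor} (hx : x ∈ U) :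
    ∃ n, cyl (stringOf x n) ⊆ U := by
  obtain ⟨I, u, hu, hsub⟩ := isOpen_pi_iff.mp hU x hx
  rcases I.bddAbove with ⟨m, hm⟩
  refine ⟨m + 1, fun y hy => hsub fun i hi => ?_⟩
  have hiy : y i = x i :=
    mem_cyl_stringOf_iff.mp hy i (Nat.lt_succ_of_le (hm hi))
  rw [hiy]; exact (hu i hi).2

lemma isOpen_hit {U : Set Cantor} (hU : IsOpen U) :
    IsOpen {K : CC | (K.1 ∩ U).Nonempty} :=
  TopologicalSpace.isOpen_generateFrom_of_mem (Or.inl ⟨U, hU, rfl⟩)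

lemma isOpen_sub {U : Set Cantor} (hU : IsOpen U) :
    IsOpen {K : CC | K.1 ⊆ U} :=
  TopologicalSpace.isOpen_generateFrom_of_mem (Or.inr ⟨U, hU, rfl⟩)

lemma isClopen_hit_cyl (σ : List Bool) :
    IsClopen {K : CC | (K.1 ∩ cyl σ).Nonempty} := by
  constructor
  · rw [← isOpen_compl_iff]
    have : {K : CC | (K.1 ∩ cyl σ).Nonempty}ᶜ = {K : CC | K.1 ⊆ (cyl σ)ᶜ} := by
      ext K
      simp [Set.not_nonempty_iff_eq_empty, ← Set.disjoint_iff_inter_eq_empty,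
        Set.disjoint_right, Set.subset_def]
      tauto
    rw [this]
    exact isOpen_sub (isClosed_cyl σ).isOpen_compl
  · exact isOpen_hit (isOpen_cyl σ)

lemma UA_eq (n : ℕ) (A : Finset (List Bool)) :
    UA n A = ⋂ σ ∈ {σ : List Bool | σ.length ≤ n},
      (if σ ∈ A then {K : CC | (K.1 ∩ cyl σ).Nonempty}
       else {K : CC | (K.1 ∩ cyl σ).Nonempty}ᶜ) := by
  ext K
  simp only [UA, Set.mem_setOf_eq, Set.mem_iInter]
  constructor
  · intro h σ hσ
    by_cases hA : σ ∈ A <;> simp [hA, ← (h σ hσ)]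
  · intro h σ hσ
    have := h σ hσ
    by_cases hA : σ ∈ A <;> simp [hA] at this <;> simp [hA, this]

lemma isClopen_UA (n : ℕ) (A : Finset (List Bool)) : IsClopen (UA n A) := by
  rw [UA_eq]
  have hfin : {σ : List Bool | σ.length ≤ n}.Finite := List.finite_length_le Bool n
  constructor
  · exact isClosed_biInter fun σ _ => by
      split
      · exact (isClopen_hit_cyl σ).1
      · exact (isClopen_hit_cyl σ).2.isClosed_compl
  · exact hfin.isOpen_biInter fun σ _ => by
      split
      · exact (isClopen_hit_cyl σ).2
      · exact (isClopen_hit_cyl σ).1.isOpen_compl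

-- the canonical tree of K at level n
noncomputable def AK (K : CC) (n : ℕ) : Finset (List Bool) :=
  ((List.finite_length_le Bool n).subset
    (Set.sep_subset _ fun σ => (K.1 ∩ cyl σ).Nonempty) : Set.Finite
      {σ : List Bool | σ.length ≤ n ∧ (K.1 ∩ cyl σ).Nonempty}).toFinset

lemma mem_AK {K : CC} {n : ℕ} {σ : List Bool} :
    σ ∈ AK K n ↔ σ.length ≤ n ∧ (K.1 ∩ cyl σ).Nonempty := by
  simp [AK]

lemma mem_UA_AK (K : CC) (n : ℕ) : K ∈ UA n (AK K n) := by
  intro σ hσ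
  simp [mem_AK, hσ]

lemma finTree_AK (K : CC) (n : ℕ) : FinTree n (AK K n) := by
  refine ⟨⟨[], ?_⟩, fun σ hσ => (mem_AK.mp hσ).1, ?_, ?_⟩
  · rw [mem_AK]
    refine ⟨Nat.zero_le n, ?_⟩
    obtain ⟨x, hx⟩ := K.2.1
    exact ⟨x, hx, fun i => absurd i.2 (by simp)⟩
  · intro σ τ hpre hτ
    rw [mem_AK] at hτ ⊢
    exact ⟨le_trans hpre.length_le hτ.1, hτ.2.mono (Set.inter_subset_inter_right _ (cyl_mono hpre))⟩
  · intro σ hσ hlen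
    obtain ⟨x, hxK, hxc⟩ := (mem_AK.mp hσ).2
    have hx' : x ∈ cyl (σ ++ [x σ.length]) := by
      intro ⟨i, hi⟩
      have hσ1 : (σ ++ [x σ.length]).length = σ.length + 1 := by simp
      rw [hσ1] at hi
      rcases Nat.lt_or_ge i σ.length with h | h
      · have := hxc ⟨i, h⟩
        simpa [List.getElem_append, h] using this
      · have : i = σ.length := by omega
        subst this
        simp [List.getElem_append]
    have hlen' : ∀ b : Bool, (σ ++ [b]).length ≤ n := fun b => by
      have : (σ ++ [b]).length = σ.length + 1 := by simp
      omega
    rcases Bool.dichotomy (x σ.length) with hb | hb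
    · left; rw [mem_AK]; rw [hb] at hx'
      exact ⟨hlen' false, ⟨x, hxK, hx'⟩⟩
    · right; rw [mem_AK]; rw [hb] at hx'
      exact ⟨hlen' true, ⟨x, hxK, hx'⟩⟩

lemma UA_AK_mono {K K' : CC} {m n : ℕ} (hmn : m ≤ n) (h : K' ∈ UA n (AK K n)) :
    K' ∈ UA m (AK K m) := by
  intro σ hσ
  rw [mem_AK, ← h σ (hσ.trans hmn), mem_AK]
  simp [hσ, hσ.trans hmn]


/-- each `U_A` is clopen in the hit-or-miss topology, and the family of all
`U_A` (for `A` a finite tree of height `n` without dead ends) is a basis for it. -/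
theorem stmt_12 :
    (∀ (n : ℕ) (A : Finset (List Bool)), FinTree n A → IsClopen (UA n A)) ∧
    TopologicalSpace.IsTopologicalBasis
      {S : Set CC | ∃ (n : ℕ) (A : Finset (List Bool)), FinTree n A ∧ S = UA n A} := by
  refine ⟨fun n A _ => isClopen_UA n A, ?_⟩
  refine TopologicalSpace.isTopologicalBasis_of_isOpen_of_nhds ?_ ?_
  · rintro S ⟨n, A, _, rfl⟩
    exact (isClopen_UA n A).2
  · intro K S hK hS
    suffices h : ∃ n, UA n (AK K n) ⊆ S by
      obtain ⟨n, hn⟩ := h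
      exact ⟨UA n (AK K n), ⟨n, AK K n, finTree_AK K n, rfl⟩, mem_UA_AK K n, hn⟩
    induction hS with
    | basic S hSgen =>
      rcases hSgen with ⟨U, hU, rfl⟩ | ⟨U, hU, rfl⟩
      · -- hit set
        obtain ⟨x, hxK, hxU⟩ := hK
        obtain ⟨n, hn⟩ := exists_cyl_subset hU hxU
        refine ⟨n, fun K' hK' => ?_⟩
        have hmem : stringOf x n ∈ AK K n := by
          rw [mem_AK]
          exact ⟨le_of_eq (length_stringOf x n), ⟨x, hxK, mem_cyl_stringOf x n⟩⟩
        have := (hK' _ (le_of_eq (length_stringOf x n))).mp hmem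
        exact this.mono (Set.inter_subset_inter_right _ hn)
      · -- miss set : compactness
        have hKcomp : IsCompact K.1 := K.2.2.isCompact
        have hcov : ∀ x ∈ K.1, ∃ m, cyl (stringOf x m) ⊆ U := fun x hx =>
          exists_cyl_subset hU (hK hx)
        choose m hm using hcov
        obtain ⟨t, hcover⟩ := hKcomp.elim_nhds_subcover'
          (fun x hx => cyl (stringOf x (m x hx)))
          (fun x hx => ((isOpen_cyl _).mem_nhds (mem_cyl_stringOf _ _)))
        refine ⟨t.sup (fun x => m x.1 x.2), fun K' hK' => ?_⟩
        set N := t.sup (fun x => m x.1 x.2) with hN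
        intro y hy
        have hτ : (stringOf y N) ∈ AK K N :=
          (hK' _ (le_of_eq (length_stringOf y N))).mpr ⟨y, hy, mem_cyl_stringOf y N⟩
        obtain ⟨z, hzK, hzc⟩ := (mem_AK.mp hτ).2
        have hz' := hcover hzK
        simp only [Set.mem_iUnion] at hz'
        obtain ⟨x, hxt, hzx⟩ := hz'
        have hmN : m x.1 x.2 ≤ N := Finset.le_sup (f := fun x => m x.1 x.2) hxt
        refine hm x.1 x.2 (mem_cyl_stringOf_iff.mpr fun i hi => ?_)
        have h2 : z i = y i := mem_cyl_stringOf_iff.mp hzc i (by omega)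
        have h3 : z i = x.1 i := mem_cyl_stringOf_iff.mp hzx i hi
        rw [← h2, h3]
    | univ => exact ⟨0, fun _ _ => trivial⟩
    | inter S T hS hT ihS ihT =>
      obtain ⟨n₁, h₁⟩ := ihS hK.1
      obtain ⟨n₂, h₂⟩ := ihT hK.2
      exact ⟨max n₁ n₂, fun K' hK' =>
        ⟨h₁ (UA_AK_mono (le_max_left _ _) hK'), h₂ (UA_AK_mono (le_max_right _ _) hK')⟩⟩
    | sUnion 𝒮 h ih =>
      obtain ⟨T, hT𝒮, hKT⟩ := hK
      obtain ⟨n, hn⟩ := ih T hT𝒮 hKT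
      exact ⟨n, fun K' hK' => ⟨T, hT𝒮, hn hK'⟩⟩
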